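/- Let p be an odd prime, ν ≥ 1 an integer, and a, b integers. If min(ν, v_p(b)) < min(ν, v_p(a)), where v_p denotes the p-adic valuation (with v_p(0) treated as larger than ν), then ∑_{x mod p^ν} e_{p^ν}(ax² + bx) = 0. -/

import Mathlib

/-- `e_q(t) = exp(2πit/q)`. -/
noncomputable def eq' (q : ℕ) (t : ℤ) : ℂ :=
  Complex.exp (2 * Real.pi * Complex.I * t / q)

lemma eq'_add (q : ℕ) (s t : ℤ) : eq' q (s + t) = eq' q s * eq' q t := by
  unfold eq'
  rw [← Complex.exp_add]
  push_cast
  ring_nf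

lemma eq'_int_mul (q : ℕ) (hq : 0 < q) (k : ℤ) : eq' q ((q : ℤ) * k) = 1 := by
  unfold eq'
  have hq0 : (q : ℂ) ≠ 0 := Nat.cast_ne_zero.mpr hq.ne'
  push_cast
  rw [show 2 * (Real.pi : ℂ) * Complex.I * ((q : ℂ) * k) / q = (k : ℂ) * (2 * Real.pi * Complex.I)
    by field_simp]
  exact Complex.exp_int_mul_two_pi_mul_I k

lemma eq'_congr (q : ℕ) (hq : 0 < q) (s t : ℤ) (hd : (q : ℤ) ∣ s - t) :
    eq' q s = eq' q t := by
  obtain ⟨k, hk⟩ := hd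
  have : s = t + (q : ℤ) * k := by linarith
  rw [this, eq'_add, eq'_int_mul q hq k, mul_one]

lemma eq'_eq_one_iff (q : ℕ) (hq : 0 < q) (t : ℤ) : eq' q t = 1 ↔ (q : ℤ) ∣ t := by
  constructor
  · intro h
    rw [eq', Complex.exp_eq_one_iff] at h
    obtain ⟨n, hn⟩ := h
    have hq0 : (q : ℂ) ≠ 0 := Nat.cast_ne_zero.mpr hq.ne'
    have h2 : (t : ℂ) = (n : ℂ) * q := by
      have := Complex.two_pi_I_ne_zero
      field_simp at hn
      rw [mul_comm ((q:ℂ)) _] at hn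
      have hn' : (2 * (Real.pi : ℂ) * Complex.I) * (t : ℂ)
          = (2 * (Real.pi : ℂ) * Complex.I) * ((n : ℂ) * q) := by
        rw [hn]
      exact mul_left_cancel₀ this hn'
    refine ⟨n, ?_⟩
    have h3 : (t : ℂ) = (q : ℂ) * n := by rw [h2]; ring
    exact_mod_cast h3
  · rintro ⟨k, rfl⟩
    exact eq'_int_mul q hq k

/-- Shifting a `q`-periodic function by one doesn't change the sum over `range q`. -/
lemma sum_shift_one (q : ℕ) (g : ℤ → ℂ) (hg : ∀ s k : ℤ, g (s + (q : ℤ) * k) = g s) :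
    ∑ x ∈ Finset.range q, g ((x : ℤ) + 1) = ∑ x ∈ Finset.range q, g (x : ℤ) := by
  have h1 := Finset.sum_range_succ' (fun n : ℕ => g (n : ℤ)) q
  have h2 := Finset.sum_range_succ (fun n : ℕ => g (n : ℤ)) q
  have hq : g (q : ℤ) = g 0 := by
    have := hg 0 1
    simpa using this
  have h3 : ∑ x ∈ Finset.range q, g (((x : ℕ) + 1 : ℕ) : ℤ)
      = ∑ x ∈ Finset.range q, g ((x : ℤ) + 1) := by
    apply Finset.sum_congr rfl
    intro x _
    push_cast
    ring_nf
  rw [← h3]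
  have : (0 : ℕ) = (0 : ℕ) := rfl
  -- h1 : ∑ range (q+1) = ∑ range q, g (x+1) + g 0
  -- h2 : ∑ range (q+1) = ∑ range q, g x + g q
  have := h1.symm.trans h2
  -- this : ∑ g(x+1) + g 0 = ∑ g x + g q
  rw [hq] at this
  push_cast at this ⊢
  linear_combination this

/-- Shifting a `q`-periodic function by `t : ℕ` doesn't change the sum over `range q`. -/
lemma sum_shift (q : ℕ) (g : ℤ → ℂ) (hg : ∀ s k : ℤ, g (s + (q : ℤ) * k) = g s) (t : ℕ) :
    ∑ x ∈ Finset.range q, g ((x : ℤ) + t) = ∑ x ∈ Finset.range q, g (x : ℤ) := by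
  induction t with
  | zero => simp
  | succ t ih =>
    have step : ∑ x ∈ Finset.range q, g ((x : ℤ) + (t + 1 : ℕ))
        = ∑ x ∈ Finset.range q, g ((x : ℤ) + t) := by
      have := sum_shift_one q (fun s => g (s + t)) (fun s k => by
        have := hg (s + t) k
        simpa [add_right_comm] using this)
      calc ∑ x ∈ Finset.range q, g ((x : ℤ) + (t + 1 : ℕ))
          = ∑ x ∈ Finset.range q, g (((x : ℤ) + 1) + t) := by
            apply Finset.sum_congr rfl; intro x _; push_cast; ring_nf
        _ = ∑ x ∈ Finset.range q, g ((x : ℤ) + t) := this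
    rw [step, ih]

/-- For an odd prime `p`, `ν ≥ 1` and integers `a, b`, if
`min(ν, v_p(b)) < min(ν, v_p(a))` (with `v_p(0)` treated as larger than `ν`), then
`∑_{x mod p^ν} e_{p^ν}(ax² + bx) = 0`. -/
theorem gauss_sum_vanishes (p : ℕ) (hp : p.Prime) (hodd : Odd p)
    (ν : ℕ) (hν : 1 ≤ ν) (a b : ℤ)
    (h : min ν (if b = 0 then ν + 1 else padicValInt p b)
        < min ν (if a = 0 then ν + 1 else padicValInt p a)) :
    ∑ x ∈ Finset.range (p ^ ν), eq' (p ^ ν) (a * (x : ℤ) ^ 2 + b * (x : ℤ)) = 0 := by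
  haveI : Fact p.Prime := ⟨hp⟩
  set q : ℕ := p ^ ν with hq_def
  have hq : 0 < q := pow_pos hp.pos ν
  -- b ≠ 0
  have hb : b ≠ 0 := by
    intro hb0
    rw [if_pos hb0] at h
    have h1 : min ν (ν + 1) = ν := min_eq_left (Nat.le_succ ν)
    rw [h1] at h
    exact absurd h (not_lt.mpr (min_le_left _ _))
  rw [if_neg hb] at h
  set β := padicValInt p b with hβ_def
  -- β < ν
  have hβν : β < ν := by
    by_contra hc
    push_neg at hc
    rw [min_eq_left hc] at h
    exact absurd h (not_lt.mpr (min_le_left _ _))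
  rw [min_eq_right hβν.le] at h
  -- the shift t
  set t : ℤ := (p : ℤ) ^ (ν - β - 1) with ht_def
  -- key divisibility : q ∣ a * t
  have hat : (q : ℤ) ∣ a * t := by
    by_cases ha : a = 0
    · simp [ha]
    · rw [if_neg ha] at h
      have hva : β + 1 ≤ padicValInt p a := lt_of_lt_of_le h (min_le_right _ _)
      have h1 : (p : ℤ) ^ (β + 1) ∣ a :=
        dvd_trans (pow_dvd_pow _ hva) (padicValInt_dvd a)
      have h2 : (q : ℤ) = (p : ℤ) ^ (β + 1) * (p : ℤ) ^ (ν - β - 1) := by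
        rw [hq_def]
        push_cast
        rw [← pow_add]
        congr 1
        omega
      obtain ⟨c, hc⟩ := h1
      exact ⟨c, by rw [h2, hc, ht_def]; ring⟩
  -- q does not divide b * t
  have hbt : ¬ ((q : ℤ) ∣ b * t) := by
    intro hd
    have hbt0 : b * t ≠ 0 := mul_ne_zero hb (pow_ne_zero _ (by exact_mod_cast hp.pos.ne'))
    have hv : padicValInt p (b * t) = ν - 1 := by
      rw [padicValInt.mul hb (pow_ne_zero _ (by exact_mod_cast hp.pos.ne'))]
      have : padicValInt p t = ν - β - 1 := by
        rw [ht_def, show ((p:ℤ) ^ (ν - β - 1)) = ((p ^ (ν - β - 1) : ℕ) : ℤ) by push_cast; ring,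
          padicValInt.of_nat, padicValNat.prime_pow]
      rw [this, ← hβ_def]
      omega
    have := (padicValInt_dvd_iff ν (b * t)).mp (by rw [hq_def] at hd; exact_mod_cast hd)
    rcases this with h0 | hle
    · exact hbt0 h0
    · rw [hv] at hle; omega
  -- the summand as a periodic function
  set F : ℤ → ℂ := fun s => eq' q (a * s ^ 2 + b * s) with hF_def
  have hFper : ∀ s k : ℤ, F (s + (q : ℤ) * k) = F s := by
    intro s k
    apply eq'_congr q hq
    exact ⟨a * (2 * s * k + (q : ℤ) * k ^ 2) + b * k, by ring⟩
  have hcast : ((p ^ (ν - β - 1) : ℕ) : ℤ) = t := by push_cast; ring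
  have key : ∀ x : ℕ, F ((x : ℤ) + t) = eq' q (b * t) * F (x : ℤ) := by
    intro x
    have expand : a * ((x : ℤ) + t) ^ 2 + b * ((x : ℤ) + t)
        = (b * t + a * t * (2 * (x : ℤ) + t)) + (a * (x : ℤ) ^ 2 + b * (x : ℤ)) := by ring
    show eq' q (a * ((x : ℤ) + t) ^ 2 + b * ((x : ℤ) + t)) = _
    rw [expand, eq'_add]
    congr 1
    apply eq'_congr q hq
    have h1 : (b * t + a * t * (2 * (x : ℤ) + t)) - b * t = a * t * (2 * (x : ℤ) + t) := by ring
    rw [h1]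
    exact hat.mul_right _
  have hshift := sum_shift q F hFper (p ^ (ν - β - 1))
  rw [hcast] at hshift
  set S := ∑ x ∈ Finset.range q, F (x : ℤ) with hS_def
  have hS : S = eq' q (b * t) * S := by
    calc S = ∑ x ∈ Finset.range q, F ((x : ℤ) + t) := hshift.symm
      _ = ∑ x ∈ Finset.range q, eq' q (b * t) * F (x : ℤ) := by
          exact Finset.sum_congr rfl fun x _ => key x
      _ = eq' q (b * t) * S := by rw [hS_def, Finset.mul_sum]
  have hne : eq' q (b * t) ≠ 1 := fun hc => hbt ((eq'_eq_one_iff q hq _).mp hc)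
  have hS0 : S = 0 := by
    have : (eq' q (b * t) - 1) * S = 0 := by linear_combination -hS
    rcases mul_eq_zero.mp this with h0 | h0
    · exact absurd (by linear_combination h0) hne
    · exact h0
  exact hS0
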